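/- Let 0 < p < 1, let n ≥ 1, and let R₁,…,R_n be independent geometric random variables with success probability p supported on {1,2,3,…} (P(R = t) = (1−p)^{t−1} p). Then for every m < n/(2p): P( R₁ + ⋯ + R_n > m ) ≥ 1 − 1/(1 + n/4) ≥ 1/5. -/

import Mathlib

set_option maxHeartbeats 1000000


open Finset

noncomputable section

/-- `P(R₁ + ⋯ + Rₙ > m)` where `R₁,…,Rₙ` are i.i.d. geometric random variables with
success probability `p`, supported on `{1,2,3,…}` with `P(R = t) = (1-p)^{t-1} p`. -/
def geomTail (p : ℝ) (n m : ℕ) : ℝ :=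
  1 - ∑ r ∈ (Fintype.piFinset fun _ : Fin n => Finset.Icc 1 m).filter
        (fun r => ∑ i, r i ≤ m),
      ∏ i, (1 - p) ^ (r i - 1) * p

namespace GeomAux

lemma term_nonneg {p : ℝ} (hp0 : 0 < p) (hp1 : p < 1) {n : ℕ} (r : Fin n → ℕ) :
    0 ≤ ∏ i, (1 - p) ^ (r i - 1) * p := by
  refine Finset.prod_nonneg fun i _ => mul_nonneg (pow_nonneg (by linarith) _) hp0.le

lemma term_le {p : ℝ} (hp0 : 0 < p) (hp1 : p < 1) {n : ℕ} (r : Fin n → ℕ) :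
    ∏ i, (1 - p) ^ (r i - 1) * p ≤ p ^ n := by
  calc ∏ i, (1 - p) ^ (r i - 1) * p ≤ ∏ _i : Fin n, p := by
        refine Finset.prod_le_prod (fun i _ => mul_nonneg (pow_nonneg (by linarith) _) hp0.le)
          (fun i _ => ?_)
        have h1 : (1 - p) ^ (r i - 1) ≤ 1 := pow_le_one₀ (by linarith) (by linarith)
        nlinarith
    _ = p ^ n := by simp

/-- Chernoff-type core bound, entirely with finite sums. -/
lemma core {p z : ℝ} (hp0 : 0 < p) (hp1 : p < 1) (hz0 : 0 < z) (hz1 : z ≤ 1) (n m : ℕ) :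
    (∑ r ∈ (Fintype.piFinset fun _ : Fin n => Finset.Icc 1 m).filter
        (fun r => ∑ i, r i ≤ m),
      ∏ i, (1 - p) ^ (r i - 1) * p) * z ^ m
      ≤ (∑ t ∈ Finset.Icc 1 m, (1 - p) ^ (t - 1) * p * z ^ t) ^ n := by
  rw [Finset.sum_mul]
  have step1 : ∀ r ∈ (Fintype.piFinset fun _ : Fin n => Finset.Icc 1 m).filter
        (fun r => ∑ i, r i ≤ m),
      (∏ i, (1 - p) ^ (r i - 1) * p) * z ^ m
        ≤ ∏ i, (1 - p) ^ (r i - 1) * p * z ^ (r i) := by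
    intro r hr
    have hsum : ∑ i, r i ≤ m := (Finset.mem_filter.mp hr).2
    have hz : z ^ m ≤ z ^ (∑ i, r i) := pow_le_pow_of_le_one hz0.le hz1 hsum
    calc (∏ i, (1 - p) ^ (r i - 1) * p) * z ^ m
        ≤ (∏ i, (1 - p) ^ (r i - 1) * p) * z ^ (∑ i, r i) :=
          mul_le_mul_of_nonneg_left hz (term_nonneg hp0 hp1 r)
      _ = ∏ i, (1 - p) ^ (r i - 1) * p * z ^ (r i) := by
          rw [← Finset.prod_pow_eq_pow_sum, ← Finset.prod_mul_distrib]
  calc ∑ r ∈ (Fintype.piFinset fun _ : Fin n => Finset.Icc 1 m).filter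
        (fun r => ∑ i, r i ≤ m), (∏ i, (1 - p) ^ (r i - 1) * p) * z ^ m
      ≤ ∑ r ∈ (Fintype.piFinset fun _ : Fin n => Finset.Icc 1 m).filter
        (fun r => ∑ i, r i ≤ m), ∏ i, (1 - p) ^ (r i - 1) * p * z ^ (r i) :=
        Finset.sum_le_sum step1
    _ ≤ ∑ r ∈ (Fintype.piFinset fun _ : Fin n => Finset.Icc 1 m),
        ∏ i, (1 - p) ^ (r i - 1) * p * z ^ (r i) := by
        refine Finset.sum_le_sum_of_subset_of_nonneg (Finset.filter_subset _ _)
          (fun r _ _ => Finset.prod_nonneg fun i _ =>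
            mul_nonneg (mul_nonneg (pow_nonneg (by linarith) _) hp0.le) (pow_nonneg hz0.le _))
    _ = ∏ _i : Fin n, ∑ t ∈ Finset.Icc 1 m, (1 - p) ^ (t - 1) * p * z ^ t :=
        (Finset.prod_univ_sum (fun _ : Fin n => Finset.Icc 1 m)
          (fun _ t => (1 - p) ^ (t - 1) * p * z ^ t)).symm
    _ = (∑ t ∈ Finset.Icc 1 m, (1 - p) ^ (t - 1) * p * z ^ t) ^ n := by simp

lemma Icc_geom (x : ℝ) (m : ℕ) :
    ∑ t ∈ Finset.Icc 1 m, x ^ (t - 1) = ∑ j ∈ Finset.range m, x ^ j := by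
  induction m with
  | zero => simp
  | succ m ih =>
      rw [Finset.sum_Icc_succ_top (by omega), ih, Finset.sum_range_succ]
      simp

lemma G_le {p z : ℝ} (hp0 : 0 < p) (hp1 : p < 1) (hz0 : 0 < z) (hz1 : z ≤ 1) (m : ℕ) :
    ∑ t ∈ Finset.Icc 1 m, (1 - p) ^ (t - 1) * p * z ^ t ≤ p * z / (1 - (1 - p) * z) := by
  have hq0 : (0:ℝ) ≤ (1 - p) * z := mul_nonneg (by linarith) hz0.le
  have hq1 : (1 - p) * z < 1 := by nlinarith
  have hrw : ∀ t ∈ Finset.Icc 1 m,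
      (1 - p) ^ (t - 1) * p * z ^ t = p * z * ((1 - p) * z) ^ (t - 1) := by
    intro t ht
    have h1 : 1 ≤ t := (Finset.mem_Icc.mp ht).1
    have hz' : z ^ t = z ^ (t - 1) * z := by
      conv_lhs => rw [← Nat.sub_add_cancel h1]
      rw [pow_succ]
    rw [hz', mul_pow]; ring
  rw [Finset.sum_congr rfl hrw, ← Finset.mul_sum, Icc_geom]
  have hgs : ∑ j ∈ Finset.range m, ((1 - p) * z) ^ j ≤ 1 / (1 - (1 - p) * z) := by
    rw [geom_sum_eq (by nlinarith : (1 - p) * z ≠ 1)]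
    have heq : (((1 - p) * z) ^ m - 1) / ((1 - p) * z - 1)
        = (1 - ((1 - p) * z) ^ m) / (1 - (1 - p) * z) := by
      rw [← neg_sub (((1 - p) * z) ^ m) 1, ← neg_sub ((1 - p) * z) 1, neg_div_neg_eq]
    rw [heq]
    have hxm : (0:ℝ) ≤ ((1 - p) * z) ^ m := pow_nonneg hq0 _
    apply div_le_div_of_nonneg_right (by linarith) (by linarith)
  calc p * z * ∑ j ∈ Finset.range m, ((1 - p) * z) ^ j
      ≤ p * z * (1 / (1 - (1 - p) * z)) :=
        mul_le_mul_of_nonneg_left hgs (by positivity)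
    _ = p * z / (1 - (1 - p) * z) := by ring

lemma gaussR (m : ℕ) : ∑ a ∈ Finset.Icc 1 m, (a : ℝ) = m * (m + 1) / 2 := by
  induction m with
  | zero => simp
  | succ m ih =>
      rw [Finset.sum_Icc_succ_top (by omega), ih]
      push_cast; ring

lemma exp_half_le : Real.exp (1/2) ≤ 1.64874 := by
  have h2 : Real.exp (1/2) * Real.exp (1/2) = Real.exp 1 := by
    rw [← Real.exp_add]; norm_num
  have h := Real.exp_one_lt_d9
  nlinarith [Real.exp_pos (1/2 : ℝ)]

lemma ind_bound (n : ℕ) (h : 3 ≤ n) : ((n:ℝ) + 4) * 1.64874 ^ n ≤ 4 * 2 ^ n := by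
  induction n, h using Nat.le_induction with
  | base => norm_num
  | succ n hn ih =>
      have hcn : (0:ℝ) < 1.64874 ^ n := by positivity
      have hn3 : (3:ℝ) ≤ n := by exact_mod_cast hn
      push_cast
      rw [pow_succ, pow_succ]
      nlinarith

end GeomAux

/-- Paley–Zygmund-type anti-concentration: if `m < n/(2p)` then the sum of `n`
i.i.d. `Geometric(p)` variables exceeds `m` with probability at least
`1 − 1/(1 + n/4) ≥ 1/5`. -/
theorem geometric_sum_anticoncentration
    (p : ℝ) (hp0 : 0 < p) (hp1 : p < 1) (n m : ℕ) (hn : 1 ≤ n)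
    (hm : (m : ℝ) < (n : ℝ) / (2 * p)) :
    1 - 1 / (1 + (n : ℝ) / 4) ≤ geomTail p n m ∧
      (1 : ℝ) / 5 ≤ 1 - 1 / (1 + (n : ℝ) / 4) := by
  have hn1 : (1:ℝ) ≤ n := by exact_mod_cast hn
  have hn4 : (0:ℝ) < 1 + (n:ℝ)/4 := by linarith
  have hpm : 2 * p * m < n := by
    have := (lt_div_iff₀ (by positivity : (0:ℝ) < 2*p)).mp hm
    linarith
  constructor
  · have h44 : (1:ℝ)/(1+(n:ℝ)/4) = 4/((n:ℝ)+4) := by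
      rw [div_eq_div_iff (ne_of_gt hn4) (by positivity)]; ring
    have key : (∑ r ∈ (Fintype.piFinset fun _ : Fin n => Finset.Icc 1 m).filter
          (fun r => ∑ i, r i ≤ m),
        ∏ i, (1 - p) ^ (r i - 1) * p) ≤ 4 / ((n:ℝ) + 4) := by
      by_cases hmn : m < n
      · -- the event is empty
        have hempty : (Fintype.piFinset fun _ : Fin n => Finset.Icc 1 m).filter
            (fun r => ∑ i, r i ≤ m) = ∅ := by
          rw [Finset.eq_empty_iff_forall_notMem]
          intro r hr
          rw [Finset.mem_filter] at hr
          obtain ⟨hbox, hsum⟩ := hr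
          have hge : ∀ i, 1 ≤ r i := fun i =>
            (Finset.mem_Icc.mp (Fintype.mem_piFinset.mp hbox i)).1
          have hnle : n ≤ ∑ i, r i := by
            calc n = ∑ _i : Fin n, 1 := by simp
              _ ≤ ∑ i, r i := Finset.sum_le_sum fun i _ => hge i
          omega
        rw [hempty, Finset.sum_empty]
        positivity
      push_neg at hmn
      by_cases h1 : n = 1
      · subst h1
        have hcore := GeomAux.core hp0 hp1 one_pos le_rfl 1 m
        have hG : ∑ t ∈ Finset.Icc 1 m, (1-p)^(t-1)*p*(1:ℝ)^t ≤ p * m := by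
          calc ∑ t ∈ Finset.Icc 1 m, (1-p)^(t-1)*p*(1:ℝ)^t
              ≤ ∑ _t ∈ Finset.Icc 1 m, p := by
                refine Finset.sum_le_sum fun t _ => ?_
                have h1 : (1 - p) ^ (t-1) ≤ 1 := pow_le_one₀ (by linarith) (by linarith)
                have h2 : (0:ℝ) < 1 := one_pos
                rw [one_pow]
                nlinarith
            _ = ((Finset.Icc 1 m).card : ℝ) * p := by
                rw [Finset.sum_const, nsmul_eq_mul]
            _ = p * m := by rw [Nat.card_Icc]; simp [mul_comm]
        have hSA : (∑ r ∈ (Fintype.piFinset fun _ : Fin 1 => Finset.Icc 1 m).filter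
              (fun r => ∑ i, r i ≤ m),
            ∏ i, (1 - p) ^ (r i - 1) * p) ≤ p * m := by
          rw [one_pow, mul_one, pow_one] at hcore
          exact hcore.trans hG
        have hpm' : p * m < 1/2 := by push_cast at hpm; linarith
        have : (4:ℝ)/(((1:ℕ):ℝ)+4) = 4/5 := by norm_num
        rw [this]
        linarith
      by_cases h2 : n = 2
      · subst h2
        set A := (Fintype.piFinset fun _ : Fin 2 => Finset.Icc 1 m).filter
            (fun r => ∑ i, r i ≤ m) with hA
        set T := ((Finset.Icc 1 m) ×ˢ (Finset.Icc 1 m)).filter (fun x => x.1 + x.2 ≤ m) with hT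
        have hcard : A.card ≤ T.card := by
          apply Finset.card_le_card_of_injOn (fun r => (r 0, r 1))
          · intro r hr
            rw [hA, Finset.mem_coe, Finset.mem_filter] at hr
            obtain ⟨hbox, hsum⟩ := hr
            have h0 := Fintype.mem_piFinset.mp hbox 0
            have h1' := Fintype.mem_piFinset.mp hbox 1
            rw [Fin.sum_univ_two] at hsum
            rw [hT, Finset.mem_coe, Finset.mem_filter, Finset.mem_product]
            exact ⟨⟨h0, h1'⟩, hsum⟩
          · intro r _ s _ hrs
            have e0 : r 0 = s 0 := congrArg Prod.fst hrs
            have e1 : r 1 = s 1 := congrArg Prod.snd hrs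
            funext i
            fin_cases i
            · exact e0
            · exact e1
        have hTcard : (T.card : ℝ) ≤ (m:ℝ)^2 / 2 := by
          have hfib : T.card = ∑ a ∈ Finset.Icc 1 m, ((T.filter (fun x => x.1 = a)).card) := by
            apply Finset.card_eq_sum_card_fiberwise
            intro x hx
            exact (Finset.mem_product.mp (Finset.mem_filter.mp hx).1).1
          have hfle : ∀ a ∈ Finset.Icc 1 m, ((T.filter (fun x => x.1 = a)).card) ≤ m - a := by
            intro a ha
            have hle : (T.filter (fun x => x.1 = a)).card ≤ (Finset.Icc 1 (m - a)).card := by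
              apply Finset.card_le_card_of_injOn (fun x => x.2)
              · intro x hx
                rw [Finset.mem_coe, Finset.mem_filter] at hx
                obtain ⟨hxT, hxa⟩ := hx
                rw [hT, Finset.mem_filter, Finset.mem_product] at hxT
                simp only [Finset.mem_Icc, Finset.mem_coe] at hxT ⊢
                omega
              · intro x hx y hy hxy
                rw [Finset.mem_coe, Finset.mem_filter] at hx hy
                exact Prod.ext (hx.2.trans hy.2.symm) hxy
            simpa [Nat.card_Icc] using hle
          calc (T.card : ℝ)
              = ∑ a ∈ Finset.Icc 1 m, (((T.filter (fun x => x.1 = a)).card : ℝ)) := by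
                rw [hfib]; push_cast; rfl
            _ ≤ ∑ a ∈ Finset.Icc 1 m, ((m:ℝ) - a) := by
                refine Finset.sum_le_sum fun a ha => ?_
                have ham : a ≤ m := (Finset.mem_Icc.mp ha).2
                have hcast : (((T.filter (fun x => x.1 = a)).card : ℕ) : ℝ)
                    ≤ ((m - a : ℕ) : ℝ) := Nat.cast_le.mpr (hfle a ha)
                rwa [Nat.cast_sub ham] at hcast
            _ = ((Finset.Icc 1 m).card : ℝ) * (m:ℝ) - (m * (m+1) / 2) := by
                rw [Finset.sum_sub_distrib, Finset.sum_const, nsmul_eq_mul, GeomAux.gaussR]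
            _ ≤ (m:ℝ)^2/2 := by
                rw [Nat.card_Icc]
                push_cast
                nlinarith [Nat.cast_nonneg (α := ℝ) m]
        have hSA : (∑ r ∈ A, ∏ i, (1 - p) ^ (r i - 1) * p) ≤ (A.card : ℝ) * p^2 := by
          calc ∑ r ∈ A, ∏ i, (1-p)^(r i - 1)*p
              ≤ ∑ _r ∈ A, p^2 := Finset.sum_le_sum (fun r _ => GeomAux.term_le hp0 hp1 r)
            _ = (A.card : ℝ) * p^2 := by rw [Finset.sum_const, nsmul_eq_mul]
        have hpm2 : p * m < 1 := by push_cast at hpm; nlinarith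
        have hc2 : (A.card : ℝ) ≤ (T.card : ℝ) := Nat.cast_le.mpr hcard
        have hfin : (∑ r ∈ A, ∏ i, (1 - p) ^ (r i - 1) * p) ≤ (p*m)^2/2 := by
          calc (∑ r ∈ A, ∏ i, (1 - p) ^ (r i - 1) * p)
              ≤ (A.card : ℝ) * p^2 := hSA
            _ ≤ (T.card : ℝ) * p^2 := by nlinarith [sq_nonneg p]
            _ ≤ ((m:ℝ)^2/2) * p^2 := by nlinarith [sq_nonneg p]
            _ = (p*m)^2/2 := by ring
        have h24 : (4:ℝ)/(((2:ℕ):ℝ)+4) = 2/3 := by norm_num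
        rw [h24]
        nlinarith [hp0.le, Nat.cast_nonneg (α := ℝ) m, mul_nonneg hp0.le (Nat.cast_nonneg (α := ℝ) m)]
      have h3 : 3 ≤ n := by omega
      by_cases hmn0 : m = n
      · subst hmn0
        set A := (Fintype.piFinset fun _ : Fin m => Finset.Icc 1 m).filter
            (fun r => ∑ i, r i ≤ m) with hA
        have hsub : A ⊆ {fun _ => 1} := by
          intro r hr
          rw [hA, Finset.mem_filter] at hr
          obtain ⟨hbox, hsum⟩ := hr
          have hge : ∀ i, 1 ≤ r i := fun i =>
            (Finset.mem_Icc.mp (Fintype.mem_piFinset.mp hbox i)).1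
          rw [Finset.mem_singleton]
          funext i
          by_contra hne
          have h1i : 1 < r i := lt_of_le_of_ne (hge i) (Ne.symm hne)
          have hlt : (∑ _i : Fin m, 1) < ∑ i, r i :=
            Finset.sum_lt_sum (fun i _ => hge i) ⟨i, Finset.mem_univ i, h1i⟩
          simp only [Finset.sum_const, Finset.card_univ, Fintype.card_fin, smul_eq_mul,
            mul_one] at hlt
          omega
        have hcard1 : A.card ≤ 1 := by
          have := Finset.card_le_card hsub
          simpa using this
        have hSA : (∑ r ∈ A, ∏ i, (1 - p) ^ (r i - 1) * p) ≤ p ^ m := by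
          calc ∑ r ∈ A, ∏ i, (1-p)^(r i - 1)*p
              ≤ ∑ _r ∈ A, p^m := Finset.sum_le_sum (fun r _ => GeomAux.term_le hp0 hp1 r)
            _ = (A.card : ℝ) * p^m := by rw [Finset.sum_const, nsmul_eq_mul]
            _ ≤ 1 * p^m := by
                have : (A.card : ℝ) ≤ 1 := by exact_mod_cast hcard1
                exact mul_le_mul_of_nonneg_right this (by positivity)
            _ = p^m := one_mul _
        have hp2 : p ≤ 1/2 := by
          have hm3 : (3:ℝ) ≤ (m:ℝ) := by exact_mod_cast h3
          nlinarith
        have hpow : p^m ≤ (1/2:ℝ)^m := pow_le_pow_left₀ hp0.le hp2 m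
        have h2n : ((m:ℝ)+4) ≤ 4 * 2^m := by
          have hlt := Nat.lt_two_pow_self (n := m)
          have : (m:ℝ) + 1 ≤ 2^m := by exact_mod_cast hlt
          nlinarith
        have hhalf : (1/2:ℝ)^m ≤ 4/((m:ℝ)+4) := by
          rw [div_pow, one_pow, div_le_div_iff₀ (by positivity) (by linarith)]
          linarith
        linarith
      -- Chernoff case : 3 ≤ n, n < m
      have hk1 : n + 1 ≤ m := by omega
      set k : ℕ := m - n with hkdef
      have hk : 1 ≤ k := by omega
      have hmk : m = n + k := by omega
      have hk0 : (0:ℝ) < k := by exact_mod_cast hk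
      have hn0 : (0:ℝ) < n := by linarith
      have hm' : (m:ℝ) = (n:ℝ) + (k:ℝ) := by exact_mod_cast hmk
      set z : ℝ := 2*k/(2*k+n) with hzdef
      have hden : (0:ℝ) < 2*k+n := by linarith
      have hz0 : 0 < z := div_pos (by linarith) hden
      have hz1 : z ≤ 1 := by rw [hzdef, div_le_one hden]; linarith
      have hcore := GeomAux.core hp0 hp1 hz0 hz1 n m
      have hG := GeomAux.G_le hp0 hp1 hz0 hz1 m
      have hqz : (0:ℝ) < 1 - (1-p)*z := by nlinarith
      have h2p : (1-p)*z ≤ 1 - 2*p := by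
        have hzeq : (1-p)*z = (1-p)*(2*k)/(2*k+n) := by rw [hzdef]; ring
        rw [hzeq, div_le_iff₀ hden]
        nlinarith
      have hGz : p*z/(1-(1-p)*z) ≤ z/2 := by
        rw [div_le_div_iff₀ hqz two_pos]
        nlinarith [hz0.le]
      have hGnonneg : (0:ℝ) ≤ ∑ t ∈ Finset.Icc 1 m, (1-p)^(t-1)*p*z^t :=
        Finset.sum_nonneg fun t _ =>
          mul_nonneg (mul_nonneg (pow_nonneg (by linarith) _) hp0.le) (pow_nonneg hz0.le _)
      have hGn : (∑ t ∈ Finset.Icc 1 m, (1-p)^(t-1)*p*z^t) ^ n ≤ (z/2)^n :=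
        pow_le_pow_left₀ hGnonneg (hG.trans hGz) n
      have hSA : (∑ r ∈ (Fintype.piFinset fun _ : Fin n => Finset.Icc 1 m).filter
            (fun r => ∑ i, r i ≤ m),
          ∏ i, (1 - p) ^ (r i - 1) * p) ≤ (z/2)^n / z^m := by
        rw [le_div_iff₀ (pow_pos hz0 m)]
        exact hcore.trans hGn
      have hz_ne : z ≠ 0 := ne_of_gt hz0
      have hsplit : (z/2)^n / z^m = (1/z)^k * (1/2)^n := by
        rw [hmk, pow_add, div_pow]
        field_simp
        rw [one_div_pow, one_div_pow]
        field_simp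
      have hzinv : (1:ℝ)/z = 1 + (n:ℝ)/(2*k) := by
        rw [hzdef]
        field_simp
      have hexpb : (1 + (n:ℝ)/(2*k))^k ≤ Real.exp (1/2) ^ n := by
        have h1 : (1 + (n:ℝ)/(2*k)) ≤ Real.exp ((n:ℝ)/(2*k)) := by
          have := Real.add_one_le_exp ((n:ℝ)/(2*k)); linarith
        have h2 : (1 + (n:ℝ)/(2*k))^k ≤ Real.exp ((n:ℝ)/(2*k))^k :=
          pow_le_pow_left₀ (by positivity) h1 k
        have h3 : Real.exp ((n:ℝ)/(2*k))^k = Real.exp ((n:ℝ)/2) := by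
          rw [← Real.exp_nat_mul]
          congr 1
          field_simp
        have h4 : Real.exp ((n:ℝ)/2) = Real.exp (1/2) ^ n := by
          rw [← Real.exp_nat_mul]
          congr 1
          ring
        calc (1 + (n:ℝ)/(2*k))^k ≤ Real.exp ((n:ℝ)/(2*k))^k := h2
          _ = Real.exp ((n:ℝ)/2) := h3
          _ = Real.exp (1/2) ^ n := h4
      have hcb : Real.exp (1/2)^n ≤ 1.64874^n :=
        pow_le_pow_left₀ (Real.exp_pos _).le GeomAux.exp_half_le n
      have hfinal : ((n:ℝ)+4) * 1.64874^n ≤ 4*2^n := GeomAux.ind_bound n h3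
      calc (∑ r ∈ (Fintype.piFinset fun _ : Fin n => Finset.Icc 1 m).filter
            (fun r => ∑ i, r i ≤ m),
          ∏ i, (1 - p) ^ (r i - 1) * p)
          ≤ (z/2)^n / z^m := hSA
        _ = (1/z)^k * (1/2)^n := hsplit
        _ ≤ 1.64874^n * (1/2)^n := by
            refine mul_le_mul_of_nonneg_right ?_ (by positivity)
            rw [hzinv]
            exact hexpb.trans hcb
        _ = 1.64874^n / 2^n := by
            rw [div_pow, one_pow]
            ring
        _ ≤ 4/((n:ℝ)+4) := by
            rw [div_le_div_iff₀ (by positivity) (by linarith)]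
            nlinarith [hfinal]
    unfold geomTail
    linarith [key, h44]
  · have h5 : 1/(1+(n:ℝ)/4) ≤ 4/5 := by
      rw [div_le_div_iff₀ hn4 (by norm_num)]
      linarith
    linarith

end
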